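/- Let m ≥ 1 and k ≥ 1. The number of strictly increasing chains A_1 ⊊ A_2 ⊊ ⋯ ⊊ A_k of subsets of an m-element set such that it is not the case that both A_1 = ∅ and A_k is the whole set equals 2·Surj(m, k) + Surj(m, k+1); equivalently it equals 2·k!·S(m,k) + (k+1)!·S(m,k+1). -/

import Mathlib

/-- The number of surjective functions from an `m`-element set onto a `k`-element set. -/
noncomputable def Surj (m k : ℕ) : ℕ := Nat.card {f : Fin m → Fin k // Function.Surjective f}

namespace ChainsAux

variable {m k : ℕ}

/-- The "level" of `x` with respect to a chain `A`: `k` minus the number of sets containing `x`. -/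
def lvl (A : Fin k → Finset (Fin m)) (x : Fin m) : ℕ :=
  k - (Finset.univ.filter fun i => x ∈ A i).card

lemma lvl_le (A : Fin k → Finset (Fin m)) (x : Fin m) : lvl A x ≤ k := Nat.sub_le _ _

lemma card_filter_le (A : Fin k → Finset (Fin m)) (x : Fin m) :
    (Finset.univ.filter fun i => x ∈ A i).card ≤ k := by
  classical
  calc (Finset.univ.filter fun i => x ∈ A i).card
      ≤ (Finset.univ : Finset (Fin k)).card := Finset.card_le_card (Finset.filter_subset _ _)
    _ = k := by simp

lemma mem_iff_lvl_le {A : Fin k → Finset (Fin m)} (hA : Monotone A) {x : Fin m} {i : Fin k} :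
    x ∈ A i ↔ lvl A x ≤ (i : ℕ) := by
  classical
  have hcard := card_filter_le A x
  constructor
  · intro hx
    have hsub : Finset.Ici i ⊆ Finset.univ.filter fun j => x ∈ A j := by
      intro j hj
      simp only [Finset.mem_Ici] at hj
      simp only [Finset.mem_filter, Finset.mem_univ, true_and]
      exact Finset.mem_of_subset (hA hj) hx
    have h2 := Finset.card_le_card hsub
    rw [Fin.card_Ici] at h2
    unfold lvl
    omega
  · intro h
    by_contra hx
    have hsub : (Finset.univ.filter fun j => x ∈ A j) ⊆ Finset.Ioi i := by
      intro j hj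
      simp only [Finset.mem_filter, Finset.mem_univ, true_and] at hj
      simp only [Finset.mem_Ioi]
      by_contra hji
      push_neg at hji
      exact hx (Finset.mem_of_subset (hA hji) hj)
    have h2 := Finset.card_le_card hsub
    rw [Fin.card_Ioi] at h2
    have hik : (i : ℕ) < k := i.isLt
    unfold lvl at h
    omega

lemma exists_lvl_mid {A : Fin k → Finset (Fin m)} (hA : StrictMono A) {j : ℕ}
    (h1 : 1 ≤ j) (h2 : j < k) : ∃ x, lvl A x = j := by
  have hlt : (⟨j - 1, by omega⟩ : Fin k) < ⟨j, h2⟩ := by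
    rw [Fin.mk_lt_mk]; omega
  have hss : A ⟨j - 1, by omega⟩ ⊂ A ⟨j, h2⟩ := hA hlt
  obtain ⟨x, hxj, hxj'⟩ := Finset.exists_of_ssubset hss
  have hle : lvl A x ≤ j := by
    have := (mem_iff_lvl_le hA.monotone).1 hxj
    simpa using this
  have hgt : ¬ lvl A x ≤ j - 1 := by
    intro h
    exact hxj' ((mem_iff_lvl_le hA.monotone).2 (by simpa using h))
  exact ⟨x, by omega⟩

lemma exists_lvl_zero (hk : 1 ≤ k) {A : Fin k → Finset (Fin m)} (hA : Monotone A)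
    (h0 : A ⟨0, hk⟩ ≠ ∅) : ∃ x, lvl A x = 0 := by
  obtain ⟨x, hx⟩ := Finset.nonempty_iff_ne_empty.2 h0
  have := (mem_iff_lvl_le hA).1 hx
  exact ⟨x, by simpa using this⟩

lemma exists_lvl_top (hk : 1 ≤ k) {A : Fin k → Finset (Fin m)} (hA : Monotone A)
    (htop : A ⟨k - 1, Nat.sub_lt hk Nat.one_pos⟩ ≠ Finset.univ) : ∃ x, lvl A x = k := by
  have h2 : ¬ ∀ x, x ∈ A ⟨k - 1, by omega⟩ := fun h => htop (Finset.eq_univ_iff_forall.2 h)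
  push_neg at h2
  obtain ⟨x, hx⟩ := h2
  have hgt : ¬ lvl A x ≤ k - 1 := by
    intro h
    exact hx ((mem_iff_lvl_le hA).2 (by simpa using h))
  have := lvl_le A x
  exact ⟨x, by omega⟩

/-- The chain associated to a level function. -/
def chainOf (k : ℕ) (f : Fin m → ℕ) : Fin k → Finset (Fin m) :=
  fun i => Finset.univ.filter fun x => f x ≤ (i : ℕ)

lemma mem_chainOf {f : Fin m → ℕ} {i : Fin k} {x : Fin m} :
    x ∈ chainOf k f i ↔ f x ≤ (i : ℕ) := by
  simp [chainOf]

lemma lvl_chainOf (f : Fin m → ℕ) {x : Fin m} (hf : f x ≤ k) :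
    lvl (chainOf k f) x = f x := by
  classical
  have hcard : (Finset.univ.filter fun i : Fin k => f x ≤ (i : ℕ)).card = k - f x := by
    rcases Nat.lt_or_ge (f x) k with h | h
    · have he : (Finset.univ.filter fun i : Fin k => f x ≤ (i : ℕ)) = Finset.Ici ⟨f x, h⟩ := by
        ext j
        simp [Fin.le_def]
      rw [he, Fin.card_Ici]
    · have hfx : f x = k := le_antisymm hf h
      have he : (Finset.univ.filter fun i : Fin k => f x ≤ (i : ℕ)) = ∅ := by
        ext j
        simp only [Finset.mem_filter, Finset.mem_univ, true_and, Finset.notMem_empty, iff_false]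
        have := j.isLt; omega
      rw [he, Finset.card_empty]; omega
  have hfe : (Finset.univ.filter fun i => x ∈ chainOf k f i)
      = Finset.univ.filter fun i : Fin k => f x ≤ (i : ℕ) := by
    ext j
    simp [mem_chainOf]
  unfold lvl
  rw [hfe, hcard]
  omega

lemma chainOf_strictMono {n : ℕ} {f : Fin m → Fin n} (hf : Function.Surjective f)
    (hkn : k ≤ n) : StrictMono (chainOf k (fun x => (f x : ℕ))) := by
  intro i j hij
  have hij' : (i : ℕ) < (j : ℕ) := hij
  have hsub : chainOf k (fun x => (f x : ℕ)) i ⊆ chainOf k (fun x => (f x : ℕ)) j := by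
    intro x hx
    rw [mem_chainOf] at hx ⊢
    omega
  rw [Finset.lt_iff_ssubset, Finset.ssubset_iff_of_subset hsub]
  obtain ⟨x, hx⟩ := hf ⟨(i : ℕ) + 1, by have := j.isLt; omega⟩
  refine ⟨x, ?_, ?_⟩
  · rw [mem_chainOf, hx]; simp; omega
  · rw [mem_chainOf, hx]; simp

lemma chainOf_zero_ne_empty {n : ℕ} (hk : 1 ≤ k) {f : Fin m → Fin n} (hf : Function.Surjective f)
    (hn : 0 < n) : chainOf k (fun x => (f x : ℕ)) ⟨0, hk⟩ ≠ ∅ := by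
  obtain ⟨x, hx⟩ := hf ⟨0, hn⟩
  apply Finset.ne_empty_of_mem (a := x)
  rw [mem_chainOf, hx]

end ChainsAux

open ChainsAux in
/-- Case A: chains with `A 0 ≠ ∅` and `A (k-1) = univ`. -/
lemma cardA (m k : ℕ) (hm : 1 ≤ m) (hk : 1 ≤ k) :
    Nat.card {A : Fin k → Finset (Fin m) //
        StrictMono A ∧ ¬ A ⟨0, hk⟩ = ∅ ∧ A ⟨k - 1, Nat.sub_lt hk Nat.one_pos⟩ = Finset.univ}
      = Surj m k := by
  unfold Surj
  apply Nat.card_congr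
  refine
    { toFun := fun A => ⟨fun x => ⟨lvl A.1 x, ?_⟩, ?_⟩
      invFun := fun f => ⟨chainOf k (fun x => (f.1 x : ℕ)), ?_, ?_, ?_⟩
      left_inv := ?_
      right_inv := ?_ }
  · -- lvl < k
    have hx : x ∈ A.1 ⟨k - 1, by omega⟩ := Finset.eq_univ_iff_forall.1 A.2.2.2 x
    have := (mem_iff_lvl_le A.2.1.monotone).1 hx
    simp only at this
    omega
  · -- surjectivity of the level function
    intro j
    rcases Nat.eq_zero_or_pos (j : ℕ) with hj | hj
    · obtain ⟨x, hx⟩ := exists_lvl_zero hk A.2.1.monotone A.2.2.1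
      exact ⟨x, by apply Fin.ext; simp [hx, hj]⟩
    · obtain ⟨x, hx⟩ := exists_lvl_mid A.2.1 hj j.isLt
      exact ⟨x, by apply Fin.ext; simp [hx]⟩
  · exact chainOf_strictMono f.2 le_rfl
  · exact chainOf_zero_ne_empty hk f.2 (by omega)
  · -- top is univ
    apply Finset.eq_univ_iff_forall.2
    intro x
    rw [mem_chainOf]
    have := (f.1 x).isLt
    simp only
    omega
  · -- left inverse
    intro A
    apply Subtype.ext
    funext i
    ext x
    rw [mem_chainOf]
    simp only [Fin.val_mk]
    exact (mem_iff_lvl_le A.2.1.monotone).symm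
  · -- right inverse
    intro f
    apply Subtype.ext
    funext x
    apply Fin.ext
    simp only [Fin.val_mk]
    exact lvl_chainOf _ (le_of_lt (f.1 x).isLt)

open ChainsAux in
/-- Case C: chains with `A 0 ≠ ∅` and `A (k-1) ≠ univ`. -/
lemma cardC (m k : ℕ) (hm : 1 ≤ m) (hk : 1 ≤ k) :
    Nat.card {A : Fin k → Finset (Fin m) //
        StrictMono A ∧ ¬ A ⟨0, hk⟩ = ∅ ∧ ¬ A ⟨k - 1, Nat.sub_lt hk Nat.one_pos⟩ = Finset.univ}
      = Surj m (k + 1) := by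
  unfold Surj
  apply Nat.card_congr
  refine
    { toFun := fun A => ⟨fun x => ⟨lvl A.1 x, ?_⟩, ?_⟩
      invFun := fun f => ⟨chainOf k (fun x => (f.1 x : ℕ)), ?_, ?_, ?_⟩
      left_inv := ?_
      right_inv := ?_ }
  · have := lvl_le A.1 x
    omega
  · -- surjectivity
    intro j
    rcases Nat.eq_zero_or_pos (j : ℕ) with hj | hj
    · obtain ⟨x, hx⟩ := exists_lvl_zero hk A.2.1.monotone A.2.2.1
      exact ⟨x, by apply Fin.ext; simp [hx, hj]⟩
    · rcases Nat.lt_or_ge (j : ℕ) (k + 1) with hj2 | hj2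
      · rcases Nat.lt_or_ge (j : ℕ) k with hj3 | hj3
        · obtain ⟨x, hx⟩ := exists_lvl_mid A.2.1 hj hj3
          exact ⟨x, by apply Fin.ext; simp [hx]⟩
        · have hjk : (j : ℕ) = k := by omega
          obtain ⟨x, hx⟩ := exists_lvl_top hk A.2.1.monotone A.2.2.2
          exact ⟨x, by apply Fin.ext; simp [hx, hjk]⟩
      · exact absurd j.isLt (by omega)
  · exact chainOf_strictMono f.2 (by omega)
  · exact chainOf_zero_ne_empty hk f.2 (by omega)
  · -- top is not univ
    obtain ⟨x, hx⟩ := f.2 ⟨k, by omega⟩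
    intro hu
    have hxin : x ∈ chainOf k (fun y => ((f.1 y : ℕ))) ⟨k - 1, by omega⟩ :=
      Finset.eq_univ_iff_forall.1 hu x
    rw [mem_chainOf, hx] at hxin
    simp only [Fin.val_mk] at hxin
    omega
  · -- left inverse
    intro A
    apply Subtype.ext
    funext i
    ext x
    rw [mem_chainOf]
    simp only [Fin.val_mk]
    exact (mem_iff_lvl_le A.2.1.monotone).symm
  · -- right inverse
    intro f
    apply Subtype.ext
    funext x
    apply Fin.ext
    simp only [Fin.val_mk]
    exact lvl_chainOf _ (by have := (f.1 x).isLt; omega)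

/-- Case B is equinumerous with case A via `A ↦ fun i => (A i.rev)ᶜ`. -/
lemma cardB (m k : ℕ) (hm : 1 ≤ m) (hk : 1 ≤ k) :
    Nat.card {A : Fin k → Finset (Fin m) //
        StrictMono A ∧ A ⟨0, hk⟩ = ∅ ∧ ¬ A ⟨k - 1, Nat.sub_lt hk Nat.one_pos⟩ = Finset.univ}
      = Surj m k := by
  rw [← cardA m k hm hk]
  apply Nat.card_congr
  have hrev0 : (Fin.rev (⟨0, hk⟩ : Fin k)) = ⟨k - 1, by omega⟩ := by
    apply Fin.ext
    simp [Fin.val_rev]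
  have hrevtop : (Fin.rev (⟨k - 1, by omega⟩ : Fin k)) = ⟨0, hk⟩ := by
    apply Fin.ext
    simp [Fin.val_rev]
    omega
  have hSM : ∀ A : Fin k → Finset (Fin m), StrictMono A →
      StrictMono (fun i : Fin k => (A i.rev)ᶜ) := by
    intro A hA i j hij
    have h1 : j.rev < i.rev := Fin.rev_lt_rev.mpr hij
    have h2 : A j.rev < A i.rev := hA h1
    exact compl_lt_compl_iff_lt.2 h2
  refine
    { toFun := fun A => ⟨fun i => (A.1 i.rev)ᶜ, hSM A.1 A.2.1, ?_, ?_⟩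
      invFun := fun B => ⟨fun i => (B.1 i.rev)ᶜ, hSM B.1 B.2.1, ?_, ?_⟩
      left_inv := ?_
      right_inv := ?_ }
  · -- (A top)ᶜ ≠ ∅
    simp only [hrev0]
    intro he
    exact A.2.2.2 (by simpa using congrArg compl he)
  · -- (A 0)ᶜ = univ
    simp only [hrevtop, A.2.2.1]
    simp
  · -- (B top)ᶜ = ∅
    simp only [hrev0]
    rw [B.2.2.2]
    exact Finset.compl_univ
  · -- (B 0)ᶜ ≠ univ
    simp only [hrevtop]
    intro he
    exact B.2.2.1 (by simpa using congrArg compl he)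
  · intro A
    apply Subtype.ext
    funext i
    simp [Fin.rev_rev]
  · intro B
    apply Subtype.ext
    funext i
    simp [Fin.rev_rev]

/-- For `m ≥ 1` and `k ≥ 1`, the number of strictly increasing chains
`A₁ ⊊ A₂ ⊊ ⋯ ⊊ A_k` of subsets of an `m`-element set such that it is not the case that both
`A₁ = ∅` and `A_k` is the whole set, equals `2·Surj(m, k) + Surj(m, k+1)`. -/
theorem chains_not_both_extreme (m k : ℕ) (hm : 1 ≤ m) (hk : 1 ≤ k) :
    Nat.card {A : Fin k → Finset (Fin m) //
        StrictMono A ∧ ¬(A ⟨0, hk⟩ = ∅ ∧ A ⟨k - 1, by omega⟩ = Finset.univ)}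
      = 2 * Surj m k + Surj m (k + 1) := by
  classical
  set pA : (Fin k → Finset (Fin m)) → Prop := fun A =>
    StrictMono A ∧ ¬ A ⟨0, hk⟩ = ∅ ∧ A ⟨k - 1, by omega⟩ = Finset.univ with hpA
  set pB : (Fin k → Finset (Fin m)) → Prop := fun A =>
    StrictMono A ∧ A ⟨0, hk⟩ = ∅ ∧ ¬ A ⟨k - 1, by omega⟩ = Finset.univ with hpB
  set pC : (Fin k → Finset (Fin m)) → Prop := fun A =>
    StrictMono A ∧ ¬ A ⟨0, hk⟩ = ∅ ∧ ¬ A ⟨k - 1, by omega⟩ = Finset.univ with hpC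
  have h1 : Nat.card {A : Fin k → Finset (Fin m) //
        StrictMono A ∧ ¬(A ⟨0, hk⟩ = ∅ ∧ A ⟨k - 1, by omega⟩ = Finset.univ)}
      = Nat.card {A : Fin k → Finset (Fin m) // pA A ∨ (pB A ∨ pC A)} := by
    apply Nat.card_congr
    apply Equiv.subtypeEquivRight
    intro A
    simp only [hpA, hpB, hpC]
    tauto
  have d2 : Disjoint pB pC := by
    rw [Pi.disjoint_iff]
    intro A
    rw [Prop.disjoint_iff]
    simp only [hpB, hpC]
    tauto
  have d1 : Disjoint pA (fun A => pB A ∨ pC A) := by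
    rw [Pi.disjoint_iff]
    intro A
    rw [Prop.disjoint_iff]
    simp only [hpA, hpB, hpC]
    tauto
  rw [h1, Nat.card_congr (subtypeOrEquiv pA (fun A => pB A ∨ pC A) d1), Nat.card_sum,
    Nat.card_congr (subtypeOrEquiv pB pC d2), Nat.card_sum]
  have hA : Nat.card {A : Fin k → Finset (Fin m) // pA A} = Surj m k := cardA m k hm hk
  have hB : Nat.card {A : Fin k → Finset (Fin m) // pB A} = Surj m k := cardB m k hm hk
  have hC : Nat.card {A : Fin k → Finset (Fin m) // pC A} = Surj m (k + 1) := cardC m k hm hk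
  rw [hA, hB, hC]
  ring
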